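/- Let H be an n-uniform hypergraph that is not 2-colorable and satisfies m₂(H) = n·C(2n−1, n). Then every ordering π of the vertices of H separates at most one simple pair of edges. -/

import Mathlib

open Classical

/-- `π` separates the simple pair `(X, Y)`: with `X ∩ Y = {y}`, all of `X \ {y}`
precedes `y` and `y` precedes all of `Y \ {y}` in the ordering `π`. -/
def Separates {V : Type*} [Fintype V] [DecidableEq V] (π : V ≃ Fin (Fintype.card V))
    (X Y : Finset V) : Prop :=
  ∃ y, X ∩ Y = {y} ∧ (∀ x ∈ X, x ≠ y → π x < π y) ∧ (∀ z ∈ Y, z ≠ y → π y < π z)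

/-- A hypergraph with edge set `E` is 2-colorable if some 2-coloring of the vertices
leaves no edge monochromatic. -/
def TwoColorable {V : Type*} (E : Finset (Finset V)) : Prop :=
  ∃ c : V → Bool, ∀ X ∈ E, (∃ v ∈ X, c v = true) ∧ (∃ v ∈ X, c v = false)

/-- `m₂(H)`: the number of ordered simple pairs of edges. -/
def m2 {V : Type*} [DecidableEq V] (E : Finset (Finset V)) : ℕ :=
  ((E ×ˢ E).filter fun p => (p.1 ∩ p.2).card = 1).card

open Nat

section Greedy
variable {V : Type*} [Fintype V] [DecidableEq V]

noncomputable def greedyAux (E : Finset (Finset V)) (π : V ≃ Fin (Fintype.card V)) :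
    (k : ℕ) → ((j : ℕ) → j < k → Bool) → Bool :=
  fun k ih =>
    if ∃ X ∈ E, (∃ v ∈ X, (π v : ℕ) = k) ∧ (∀ x ∈ X, (π x : ℕ) ≤ k) ∧
        ∀ x ∈ X, ∀ h : (π x : ℕ) < k, ih (π x) h = true
    then false else true

noncomputable def greedy (E : Finset (Finset V)) (π : V ≃ Fin (Fintype.card V)) : ℕ → Bool :=
  WellFounded.fix (Nat.lt_wfRel.wf) (greedyAux E π)

lemma greedy_eq (E : Finset (Finset V)) (π : V ≃ Fin (Fintype.card V)) (k : ℕ) :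
    greedy E π k = if ∃ X ∈ E, (∃ v ∈ X, (π v : ℕ) = k) ∧ (∀ x ∈ X, (π x : ℕ) ≤ k) ∧
        ∀ x ∈ X, ∀ _ : (π x : ℕ) < k, greedy E π (π x) = true
    then false else true := by
  have := WellFounded.fix_eq (Nat.lt_wfRel.wf) (greedyAux E π) k
  rw [greedy, this]
  rfl

lemma exists_sep (E : Finset (Finset V)) (hne : ∀ X ∈ E, X.Nonempty)
    (hnc : ¬ TwoColorable E) (π : V ≃ Fin (Fintype.card V)) :
    ∃ X ∈ E, ∃ Y ∈ E, (X ∩ Y).card = 1 ∧ Separates π X Y := by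
  set c : V → Bool := fun v => greedy E π (π v) with hc
  -- no edge is all-true
  have hnotall : ∀ X ∈ E, ∃ v ∈ X, c v = false := by
    intro X hX
    by_contra hcon
    push_neg at hcon
    have hall : ∀ v ∈ X, c v = true := by
      intro v hv
      have := hcon v hv
      revert this; cases c v <;> simp
    obtain ⟨v, hv, hmax⟩ := X.exists_max_image (fun x => (π x : ℕ)) (hne X hX)
    have : c v = false := by
      rw [hc]
      simp only
      rw [greedy_eq]
      rw [if_pos]
      exact ⟨X, hX, ⟨v, hv, rfl⟩, fun x hx => hmax x hx, fun x hx h => hall x hx⟩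
    rw [hall v hv] at this
    exact Bool.true_eq_false.mp this
  -- get an all-false edge
  rw [TwoColorable] at hnc
  push_neg at hnc
  obtain ⟨Y, hY, hbad⟩ := hnc c
  have hallred : ∀ v ∈ Y, c v = false := by
    intro v hv
    by_contra hv'
    have hvt : c v = true := by revert hv'; cases c v <;> simp
    obtain ⟨w, hw, hwf⟩ := hnotall Y hY
    exact absurd hwf (by simpa using hbad ⟨v, hv, hvt⟩ w hw)
  obtain ⟨y, hy, hmin⟩ := Y.exists_min_image (fun x => (π x : ℕ)) (hne Y hY)
  have hyf : greedy E π (π y) = false := hallred y hy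
  rw [greedy_eq] at hyf
  by_cases hcond : ∃ X ∈ E, (∃ v ∈ X, (π v : ℕ) = (π y : ℕ)) ∧ (∀ x ∈ X, (π x : ℕ) ≤ (π y : ℕ)) ∧
      ∀ x ∈ X, ∀ _ : (π x : ℕ) < (π y : ℕ), greedy E π (π x) = true
  · obtain ⟨X, hX, ⟨v, hv, hveq⟩, hle, htr⟩ := hcond
    have hvy : v = y := π.injective (Fin.val_injective hveq)
    subst hvy
    have hXblue : ∀ x ∈ X, x ≠ v → π x < π v ∧ c x = true := by
      intro x hx hxv
      have h1 : (π x : ℕ) < (π v : ℕ) := by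
        rcases lt_of_le_of_ne (hle x hx) (fun h => hxv (π.injective (Fin.val_injective h))) with h
        exact h
      exact ⟨h1, htr x hx h1⟩
    refine ⟨X, hX, Y, hY, ?_, ?_⟩
    · have : X ∩ Y = {v} := by
        apply Finset.eq_singleton_iff_unique_mem.mpr
        constructor
        · exact Finset.mem_inter.mpr ⟨hv, hy⟩
        · intro w hw
          by_contra hwv
          obtain ⟨hwX, hwY⟩ := Finset.mem_inter.mp hw
          have h1 := (hXblue w hwX hwv).2
          have h2 := hallred w hwY
          rw [h1] at h2
          exact Bool.true_eq_false.mp h2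
      rw [this]; exact Finset.card_singleton v
    · refine ⟨v, ?_, fun x hx hxv => (hXblue x hx hxv).1, fun z hz hzv => ?_⟩
      · apply Finset.eq_singleton_iff_unique_mem.mpr
        refine ⟨Finset.mem_inter.mpr ⟨hv, hy⟩, ?_⟩
        intro w hw
        by_contra hwv
        obtain ⟨hwX, hwY⟩ := Finset.mem_inter.mp hw
        have h1 := (hXblue w hwX hwv).2
        have h2 := hallred w hwY
        rw [h1] at h2
        exact Bool.true_eq_false.mp h2
      · have h1 := hmin z hz
        have h2 : (π v : ℕ) ≠ (π z : ℕ) := fun h => hzv (π.injective (Fin.val_injective h)).symm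
        exact Fin.lt_def.mpr (lt_of_le_of_ne h1 h2)
  · rw [if_neg hcond] at hyf
    exact absurd hyf (by simp)

end Greedy

section Peel
variable {α γ : Type*} [Fintype α] [Fintype γ] [DecidableEq α] [DecidableEq γ]

lemma peel (p : α → Prop) (τ : {a : α // ¬ p a} ↪ γ) (C : Finset γ)
    (hdisj : ∀ w : {a : α // ¬ p a}, τ w ∉ C)
    (hcard : C.card = Fintype.card {a : α // p a}) :
    (Finset.univ.filter fun ρ : α ↪ γ =>
      (∀ w : {a : α // ¬ p a}, ρ w.1 = τ w) ∧ (∀ a, p a → ρ a ∈ C)).card = C.card ! := by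
  have h1 : Fintype.card ({a : α // p a} ↪ {c : γ // c ∈ C}) = C.card ! := by
    rw [Fintype.card_embedding_eq, Fintype.card_coe, ← hcard, Nat.descFactorial_self]
  have key : (Finset.univ.filter fun ρ : α ↪ γ =>
      (∀ w : {a : α // ¬ p a}, ρ w.1 = τ w) ∧ (∀ a, p a → ρ a ∈ C)).card
      = (Finset.univ : Finset ({a : α // p a} ↪ {c : γ // c ∈ C})).card := by
    refine Finset.card_bij'
      (fun ρ hρ => (⟨fun a => ⟨ρ a.1, ((Finset.mem_filter.mp hρ).2).2 a.1 a.2⟩,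
        fun a b hab => Subtype.ext (ρ.injective (congrArg Subtype.val hab))⟩ :
        {a : α // p a} ↪ {c : γ // c ∈ C}))
      (fun β hβ => ⟨fun a => if h : p a then (β ⟨a, h⟩ : γ) else τ ⟨a, h⟩, ?_⟩) ?_ ?_ ?_ ?_
    · intro a b hab
      dsimp only at hab
      by_cases ha : p a <;> by_cases hb : p b
      · rw [dif_pos ha, dif_pos hb] at hab
        exact congrArg Subtype.val (β.injective (Subtype.ext hab))
      · rw [dif_pos ha, dif_neg hb] at hab
        exact absurd (hab ▸ (β ⟨a, ha⟩).2) (hdisj ⟨b, hb⟩)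
      · rw [dif_neg ha, dif_pos hb] at hab
        exact absurd (hab.symm ▸ (β ⟨b, hb⟩).2) (hdisj ⟨a, ha⟩)
      · rw [dif_neg ha, dif_neg hb] at hab
        exact congrArg Subtype.val (τ.injective hab)
    · intro ρ hρ; exact Finset.mem_univ _
    · intro β hβ
      simp only [Finset.mem_filter, Finset.mem_univ, true_and]
      constructor
      · intro w
        change (if h : p w.1 then (β ⟨w.1, h⟩ : γ) else τ ⟨w.1, h⟩) = τ w
        rw [dif_neg w.2]
      · intro a ha
        change (if h : p a then (β ⟨a, h⟩ : γ) else τ ⟨a, h⟩) ∈ C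
        rw [dif_pos ha]
        exact (β ⟨a, ha⟩).2
    · intro ρ hρ
      apply Function.Embedding.ext
      intro a
      change (if h : p a then (ρ a : γ) else τ ⟨a, h⟩) = ρ a
      by_cases h : p a
      · rw [dif_pos h]
      · rw [dif_neg h]
        exact (((Finset.mem_filter.mp hρ).2).1 ⟨a, h⟩).symm
    · intro β hβ
      apply Function.Embedding.ext
      intro a
      apply Subtype.ext
      change (if h : p a.1 then (β ⟨a.1, h⟩ : γ) else τ ⟨a.1, h⟩) = (β a : γ)
      rw [dif_pos a.2]
  rw [key, Finset.card_univ, h1]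
end Peel

section Helpers
variable {γ : Type*} [Fintype γ] [DecidableEq γ]

noncomputable def missing {β : Type*} [Fintype β] (f : β ↪ γ) : Finset γ :=
  (Finset.univ.image f)ᶜ

lemma mem_missing {β : Type*} [Fintype β] (f : β ↪ γ) (j : γ) :
    j ∈ missing f ↔ ∀ w, f w ≠ j := by
  simp [missing]

lemma card_missing {β : Type*} [Fintype β] (f : β ↪ γ) :
    (missing f).card = Fintype.card γ - Fintype.card β := by
  rw [missing, Finset.card_compl, Finset.card_image_of_injective _ f.injective,
    Finset.card_univ]

lemma exists_unique_rank [LinearOrder γ] (R : Finset γ) (k : ℕ) (hk : k < R.card) :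
    ∃! t, t ∈ R ∧ (R.filter fun j => t < j).card = k := by
  set f : γ → ℕ := fun t => (R.filter fun j => t < j).card with hf
  have hanti : ∀ t ∈ R, ∀ t' ∈ R, t < t' → f t' < f t := by
    intro t ht t' ht' hlt
    apply Finset.card_lt_card
    refine ⟨fun j hj => Finset.mem_filter.mpr ⟨(Finset.mem_filter.mp hj).1, lt_trans hlt (Finset.mem_filter.mp hj).2⟩, ?_⟩
    intro hsub
    have := hsub (Finset.mem_filter.mpr ⟨ht', hlt⟩)
    exact absurd (Finset.mem_filter.mp this).2 (lt_irrefl t')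
  have hinj : Set.InjOn f R := by
    intro t ht t' ht' heq
    by_contra hne
    rcases lt_or_gt_of_ne hne with h | h
    · exact absurd heq (Nat.ne_of_gt (hanti t ht t' ht' h))
    · exact absurd heq (Nat.ne_of_gt (hanti t' ht' t ht h)).symm
  have himg : R.image f ⊆ Finset.range R.card := by
    intro m hm
    obtain ⟨t, ht, rfl⟩ := Finset.mem_image.mp hm
    rw [Finset.mem_range]
    calc f t ≤ (R.erase t).card := Finset.card_le_card (by
          intro j hj
          rcases Finset.mem_filter.mp hj with ⟨hjR, hjt⟩
          exact Finset.mem_erase.mpr ⟨ne_of_gt hjt, hjR⟩)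
      _ < R.card := by
          rw [Finset.card_erase_of_mem ht]
          omega
  have heq : R.image f = Finset.range R.card := by
    apply Finset.eq_of_subset_of_card_le himg
    rw [Finset.card_range, Finset.card_image_of_injOn hinj]
  have hkmem : k ∈ R.image f := by rw [heq]; exact Finset.mem_range.mpr hk
  obtain ⟨t, ht, hft⟩ := Finset.mem_image.mp hkmem
  refine ⟨t, ⟨ht, hft⟩, ?_⟩
  intro t' ⟨ht', hft'⟩
  exact hinj ht' ht (by show f t' = f t; rw [hft]; exact hft')
end Helpers

section Bridge
variable {V : Type*} [Fintype V] [DecidableEq V]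

lemma card_filter_equiv_eq_embedding (P : (V ↪ Fin (Fintype.card V)) → Prop) :
    (Finset.univ.filter fun π : V ≃ Fin (Fintype.card V) => P π.toEmbedding).card
      = (Finset.univ.filter fun f : V ↪ Fin (Fintype.card V) => P f).card := by
  apply Finset.card_bij (fun π _ => π.toEmbedding)
  · intro π hπ
    rw [Finset.mem_filter] at hπ ⊢
    exact ⟨Finset.mem_univ _, hπ.2⟩
  · intro π hπ π' hπ' heq
    apply Equiv.ext
    intro v
    exact congrFun (congrArg (fun (g : V ↪ Fin (Fintype.card V)) => (g : V → Fin (Fintype.card V))) heq) v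
  · intro f hf
    have hbij : Function.Bijective f :=
      (Fintype.bijective_iff_injective_and_card f).mpr ⟨f.injective, by simp⟩
    refine ⟨Equiv.ofBijective f hbij, Finset.mem_filter.mpr ⟨Finset.mem_univ _, ?_⟩, ?_⟩
    · have : (Equiv.ofBijective f hbij).toEmbedding = f := by
        apply Function.Embedding.ext; intro v; rfl
      rw [this]
      exact (Finset.mem_filter.mp hf).2
    · apply Function.Embedding.ext; intro v; rfl
end Bridge


lemma card_filter_iff {α : Type*} [Fintype α] {p q : α → Prop}
    {ip : DecidablePred p} {iq : DecidablePred q} (h : ∀ a, p a ↔ q a) :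
    (@Finset.filter α p ip Finset.univ).card = (@Finset.filter α q iq Finset.univ).card := by
  congr 1
  apply Finset.ext
  intro x
  rw [@Finset.mem_filter, @Finset.mem_filter]
  exact and_congr_right (fun _ => h x)

section Count
variable {V : Type*} [Fintype V] [DecidableEq V]

set_option maxHeartbeats 1000000

lemma count_sep (n : ℕ) (hn : 1 ≤ n) (X Y : Finset V) (y : V) (hXY : X ∩ Y = {y})
    (hX : X.card = n) (hY : Y.card = n) :
    (Finset.univ.filter fun π : V ≃ Fin (Fintype.card V) => Separates π X Y).card
      * (2 * n - 1)! = (n - 1)! * ((n - 1)! * (Fintype.card V)!) := by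
  set N := Fintype.card V with hN
  have hyX : y ∈ X := by
    have : y ∈ X ∩ Y := by rw [hXY]; exact Finset.mem_singleton_self y
    exact (Finset.mem_inter.mp this).1
  have hyY : y ∈ Y := by
    have : y ∈ X ∩ Y := by rw [hXY]; exact Finset.mem_singleton_self y
    exact (Finset.mem_inter.mp this).2
  set A := X.erase y with hAdef
  set B := Y.erase y with hBdef
  have hA : A.card = n - 1 := by rw [hAdef, Finset.card_erase_of_mem hyX, hX]
  have hB : B.card = n - 1 := by rw [hBdef, Finset.card_erase_of_mem hyY, hY]
  have hyA : y ∉ A := Finset.notMem_erase y X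
  have hyB : y ∉ B := Finset.notMem_erase y Y
  have hBA : ∀ b ∈ B, ¬ b ∈ A := by
    intro b hb hbA
    have hbX : b ∈ X := Finset.mem_of_mem_erase hbA
    have hbY : b ∈ Y := Finset.mem_of_mem_erase hb
    have : b ∈ X ∩ Y := Finset.mem_inter.mpr ⟨hbX, hbY⟩
    rw [hXY, Finset.mem_singleton] at this
    exact (Finset.ne_of_mem_erase hb) this
  have hNbound : 2 * n - 1 ≤ N := by
    have h1 := Finset.card_union_add_card_inter X Y
    rw [hXY, hX, hY, Finset.card_singleton] at h1
    have h2 : (X ∪ Y).card ≤ N := by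
      rw [hN, ← Finset.card_univ]
      exact Finset.card_le_univ _
    omega
  -- switch to A/B form and embeddings
  set P' : (V ↪ Fin N) → Prop :=
    fun f => (∀ a ∈ A, f a < f y) ∧ (∀ b ∈ B, f y < f b) with hP'
  have hsepiff : ∀ π : V ≃ Fin N, Separates π X Y ↔ P' π.toEmbedding := by
    intro π
    constructor
    · rintro ⟨y', hy', h1, h2⟩
      have hyy : y = y' := by
        rw [hXY] at hy'
        exact Finset.singleton_injective hy'
      subst hyy
      constructor
      · intro a ha
        exact h1 a (Finset.mem_of_mem_erase ha) (Finset.ne_of_mem_erase ha)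
      · intro b hb
        exact h2 b (Finset.mem_of_mem_erase hb) (Finset.ne_of_mem_erase hb)
    · rintro ⟨h1, h2⟩
      refine ⟨y, hXY, ?_, ?_⟩
      · intro x hx hxy
        exact h1 x (Finset.mem_erase.mpr ⟨hxy, hx⟩)
      · intro z hz hzy
        exact h2 z (Finset.mem_erase.mpr ⟨hzy, hz⟩)
  have hbridge : (Finset.univ.filter fun π : V ≃ Fin N => Separates π X Y).card
      = (Finset.univ.filter P').card := by
    rw [Finset.filter_congr (fun π _ => hsepiff π)]
    convert card_filter_equiv_eq_embedding P' using 2 <;> congr!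
  rw [hbridge]
  -- Step 1
  haveI : Fintype {v : V // ¬ v ∈ A} := inferInstance
  set yh1 : {v : V // ¬ v ∈ A} := ⟨y, hyA⟩ with hyh1
  set r₁ : (V ↪ Fin N) → ({v : V // ¬ v ∈ A} ↪ Fin N) :=
    fun f => ⟨fun w => f w.1, fun u v huv => Subtype.ext (f.injective huv)⟩ with hr₁
  set C₁ : ({v : V // ¬ v ∈ A} ↪ Fin N) → Finset (Fin N) :=
    fun ρ => (missing ρ).filter (fun j => j < ρ yh1) with hC₁
  set g₁ : ({v : V // ¬ v ∈ A} ↪ Fin N) → Prop :=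
    fun ρ => (∀ b, ∀ hb : b ∈ B, ρ yh1 < ρ ⟨b, hBA b hb⟩) ∧ (C₁ ρ).card = n - 1 with hg₁
  have hcardA : Fintype.card {v : V // v ∈ A} = n - 1 := by
    rw [Fintype.card_coe]; exact hA
  have hcardA2 : @Fintype.card {a : V // a ∈ A}
      (@Subtype.fintype V (fun v => v ∈ A) (fun a => propDecidable _) _) = n - 1 := by
    convert hcardA using 2
  have hcardD₁ : Fintype.card {v : V // ¬ v ∈ A} = N - (n - 1) := by
    rw [Fintype.card_subtype_compl, hcardA]
  have hmiss₁ : ∀ ρ : {v : V // ¬ v ∈ A} ↪ Fin N, (missing ρ).card = n - 1 := by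
    intro ρ
    rw [card_missing, Fintype.card_fin, hcardD₁]
    omega
  have fib1 : ∀ ρ : {v : V // ¬ v ∈ A} ↪ Fin N,
      (Finset.univ.filter fun f : V ↪ Fin N => P' f ∧ r₁ f = ρ).card
        = if g₁ ρ then (n - 1)! else 0 := by
    intro ρ
    have hmemC : ∀ f : V ↪ Fin N, (∀ w : {v : V // ¬ v ∈ A}, f w.1 = ρ w) →
        (∀ a ∈ A, f a < f y) → ∀ a ∈ A, f a ∈ C₁ ρ := by
      intro f hres' hP a ha
      apply Finset.mem_filter.mpr
      constructor
      · rw [mem_missing]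
        intro w heq
        rw [← hres' w] at heq
        exact w.2 (by rw [f.injective heq]; exact ha)
      · have e1 : f y = ρ yh1 := hres' yh1
        rw [← e1]
        exact hP a ha
    by_cases hg : g₁ ρ
    · rw [if_pos hg]
      have hpred : ∀ f : V ↪ Fin N, (P' f ∧ r₁ f = ρ) ↔
          ((∀ w : {v : V // ¬ v ∈ A}, f w.1 = ρ w) ∧ (∀ a, a ∈ A → f a ∈ C₁ ρ)) := by
        intro f
        constructor
        · rintro ⟨hP, hres⟩
          have hres' : ∀ w : {v : V // ¬ v ∈ A}, f w.1 = ρ w := by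
            intro w; rw [← hres]; rfl
          exact ⟨hres', hmemC f hres' hP.1⟩
        · rintro ⟨hres', hvals⟩
          have hres : r₁ f = ρ := by
            apply Function.Embedding.ext; intro w; exact hres' w
          have e1 : f y = ρ yh1 := hres' yh1
          refine ⟨⟨?_, ?_⟩, hres⟩
          · intro a ha
            have hm := Finset.mem_filter.mp (hvals a ha)
            rw [e1]
            exact hm.2
          · intro b hb
            have e2 : f b = ρ ⟨b, hBA b hb⟩ := hres' ⟨b, hBA b hb⟩
            rw [e1, e2]
            exact hg.1 b hb
      have hdisj : ∀ w : {v : V // ¬ v ∈ A}, ρ w ∉ C₁ ρ := by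
        intro w hw
        have := (mem_missing ρ (ρ w)).mp (Finset.mem_filter.mp hw).1
        exact this w rfl
      have hp := peel (fun v : V => v ∈ A) ρ (C₁ ρ) hdisj
        (by rw [hg.2]; exact hcardA2.symm)
      refine (card_filter_iff ?_).trans (hp.trans ?_)
      · exact fun f => hpred f
      · rw [hg.2]
    · rw [if_neg hg]
      rw [Finset.card_eq_zero, Finset.filter_eq_empty_iff]
      rintro f - ⟨hP, hres⟩
      apply hg
      have hres' : ∀ w : {v : V // ¬ v ∈ A}, f w.1 = ρ w := by
        intro w; rw [← hres]; rfl
      have e1 : f y = ρ yh1 := hres' yh1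
      constructor
      · intro b hb
        have e2 : f b = ρ ⟨b, hBA b hb⟩ := hres' ⟨b, hBA b hb⟩
        rw [← e1, ← e2]
        exact hP.2 b hb
      · apply le_antisymm
        · calc (C₁ ρ).card ≤ (missing ρ).card :=
              Finset.card_le_card (Finset.filter_subset _ _)
            _ = n - 1 := hmiss₁ ρ
        · have himg : A.image f ⊆ C₁ ρ := by
            intro j hj
            obtain ⟨a, ha, rfl⟩ := Finset.mem_image.mp hj
            exact hmemC f hres' hP.1 a ha
          calc n - 1 = (A.image f).card := by
                rw [Finset.card_image_of_injective _ f.injective, hA]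
            _ ≤ (C₁ ρ).card := Finset.card_le_card himg
  have step1 : (Finset.univ.filter P').card
      = (Finset.univ.filter g₁).card * (n - 1)! := by
    rw [Finset.card_eq_sum_card_fiberwise (f := r₁) (t := Finset.univ)
      (fun x _ => Finset.mem_univ _)]
    have hterm : ∀ ρ, ((Finset.univ.filter P').filter fun f => r₁ f = ρ).card
        = if g₁ ρ then (n - 1)! else 0 := by
      intro ρ
      rw [Finset.filter_filter]
      exact fib1 ρ
    rw [Finset.sum_congr rfl (fun ρ _ => hterm ρ), ← Finset.sum_filter,
      Finset.sum_const, smul_eq_mul]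
  -- Step 2
  set yh2 : {w : {v : V // ¬ v ∈ A} // ¬ (w.1 ∈ B)} := ⟨yh1, hyB⟩ with hyh2
  set r₂ : ({v : V // ¬ v ∈ A} ↪ Fin N) → ({w : {v : V // ¬ v ∈ A} // ¬ (w.1 ∈ B)} ↪ Fin N) :=
    fun ρ => ⟨fun u => ρ u.1, fun u v huv => Subtype.ext (ρ.injective huv)⟩ with hr₂
  set C₂ : ({w : {v : V // ¬ v ∈ A} // ¬ (w.1 ∈ B)} ↪ Fin N) → Finset (Fin N) :=
    fun τ => (missing τ).filter (fun j => τ yh2 < j) with hC₂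
  set g₂ : ({w : {v : V // ¬ v ∈ A} // ¬ (w.1 ∈ B)} ↪ Fin N) → Prop :=
    fun τ => (C₂ τ).card = n - 1 with hg₂
  have hcardBsub : Fintype.card {w : {v : V // ¬ v ∈ A} // w.1 ∈ B} = n - 1 := by
    rw [← hB, ← Fintype.card_coe]
    apply Fintype.card_congr
    exact ⟨fun u => ⟨u.1.1, u.2⟩, fun b => ⟨⟨b.1, hBA b.1 b.2⟩, b.2⟩,
      fun u => by apply Subtype.ext; apply Subtype.ext; rfl, fun b => rfl⟩
  have hcardD₂ : Fintype.card {w : {v : V // ¬ v ∈ A} // ¬ (w.1 ∈ B)} = N - (n-1) - (n-1) := by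
    rw [Fintype.card_subtype_compl, hcardBsub, hcardD₁]
  have hmiss₂ : ∀ τ : {w : {v : V // ¬ v ∈ A} // ¬ (w.1 ∈ B)} ↪ Fin N,
      (missing τ).card = (n - 1) + (n - 1) := by
    intro τ
    rw [card_missing, Fintype.card_fin, hcardD₂]
    omega
  have hcardB2 : @Fintype.card {w : {v : V // ¬ v ∈ A} // w.1 ∈ B}
      (@Subtype.fintype _ (fun w : {v : V // ¬ v ∈ A} => w.1 ∈ B) (fun a => propDecidable _) _) = n - 1 := by
    convert hcardBsub using 2
  have hBimcard : (Finset.univ.filter (fun w : {v : V // ¬ v ∈ A} => w.1 ∈ B)).card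
      = n - 1 := by
    rw [← hcardBsub]
    convert (Fintype.card_subtype (fun w : {v : V // ¬ v ∈ A} => w.1 ∈ B)).symm using 2
  have fib2 : ∀ τ : {w : {v : V // ¬ v ∈ A} // ¬ (w.1 ∈ B)} ↪ Fin N,
      (Finset.univ.filter fun ρ : {v : V // ¬ v ∈ A} ↪ Fin N => g₁ ρ ∧ r₂ ρ = τ).card
        = if g₂ τ then (n - 1)! else 0 := by
    intro τ
    have hBmem : ∀ ρ : {v : V // ¬ v ∈ A} ↪ Fin N,
        (∀ u : {w : {v : V // ¬ v ∈ A} // ¬ (w.1 ∈ B)}, ρ u.1 = τ u) →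
        (∀ b, ∀ hb : b ∈ B, ρ yh1 < ρ ⟨b, hBA b hb⟩) →
        ∀ w : {v : V // ¬ v ∈ A}, w.1 ∈ B → ρ w ∈ C₂ τ := by
      intro ρ hres' hord w hw
      apply Finset.mem_filter.mpr
      constructor
      · rw [mem_missing]
        intro u heq
        have h2 : u.1 = w := ρ.injective ((hres' u).trans heq)
        apply u.2
        rw [h2]; exact hw
      · have e1 : ρ yh1 = τ yh2 := hres' yh2
        have hww : (⟨w.1, hBA w.1 hw⟩ : {v : V // ¬ v ∈ A}) = w := Subtype.ext rfl
        rw [← e1]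
        have h3 := hord w.1 hw
        rw [hww] at h3
        exact h3
    by_cases hg : g₂ τ
    · have hgc : (C₂ τ).card = n - 1 := hg
      rw [if_pos hg]
      have hpred : ∀ ρ : {v : V // ¬ v ∈ A} ↪ Fin N, (g₁ ρ ∧ r₂ ρ = τ) ↔
          ((∀ u : {w : {v : V // ¬ v ∈ A} // ¬ (w.1 ∈ B)}, ρ u.1 = τ u)
            ∧ (∀ w : {v : V // ¬ v ∈ A}, w.1 ∈ B → ρ w ∈ C₂ τ)) := by
        intro ρ
        constructor
        · rintro ⟨hg1, hres⟩
          have hres' : ∀ u : {w : {v : V // ¬ v ∈ A} // ¬ (w.1 ∈ B)}, ρ u.1 = τ u := by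
            intro u; rw [← hres]; rfl
          exact ⟨hres', hBmem ρ hres' hg1.1⟩
        · rintro ⟨hres', hvals⟩
          have hres : r₂ ρ = τ := by apply Function.Embedding.ext; intro u; exact hres' u
          have e1 : ρ yh1 = τ yh2 := hres' yh2
          refine ⟨⟨?_, ?_⟩, hres⟩
          · intro b hb
            have hm := Finset.mem_filter.mp (hvals ⟨b, hBA b hb⟩ hb)
            rw [e1]; exact hm.2
          · have hBim : (Finset.univ.filter
                (fun w : {v : V // ¬ v ∈ A} => w.1 ∈ B)).image ρ = C₂ τ := by
              apply Finset.eq_of_subset_of_card_le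
              · intro j hj
                obtain ⟨w, hwmem, rfl⟩ := Finset.mem_image.mp hj
                exact hvals w (Finset.mem_filter.mp hwmem).2
              · rw [hgc, Finset.card_image_of_injective _ ρ.injective, hBimcard]
            have hCm : C₁ ρ = missing ρ := by
              apply Finset.Subset.antisymm (Finset.filter_subset _ _)
              intro j hj
              apply Finset.mem_filter.mpr
              refine ⟨hj, ?_⟩
              rcases lt_trichotomy j (ρ yh1) with h | h | h
              · exact h
              · exact absurd h.symm (((mem_missing ρ j).mp hj) yh1)
              · exfalso
                have hjmissτ : j ∈ missing τ := by
                  rw [mem_missing]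
                  intro u
                  rw [(hres' u).symm]
                  exact (mem_missing ρ j).mp hj u.1
                have hjC₂ : j ∈ C₂ τ := Finset.mem_filter.mpr ⟨hjmissτ, by rw [← e1]; exact h⟩
                rw [← hBim] at hjC₂
                obtain ⟨w, -, hwj⟩ := Finset.mem_image.mp hjC₂
                exact (mem_missing ρ j).mp hj w hwj
            show (C₁ ρ).card = n - 1
            rw [hCm, hmiss₁ ρ]
      have hdisj : ∀ u : {w : {v : V // ¬ v ∈ A} // ¬ (w.1 ∈ B)}, τ u ∉ C₂ τ := by
        intro u hu
        exact ((mem_missing τ (τ u)).mp (Finset.mem_filter.mp hu).1) u rfl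
      have hp := peel (fun w : {v : V // ¬ v ∈ A} => w.1 ∈ B) τ (C₂ τ) hdisj
        (by rw [hgc]; exact hcardB2.symm)
      refine (card_filter_iff ?_).trans (hp.trans ?_)
      · exact fun ρ => hpred ρ
      · rw [hgc]
    · rw [if_neg hg, Finset.card_eq_zero, Finset.filter_eq_empty_iff]
      rintro ρ - ⟨hg1, hres⟩
      apply hg
      have hres' : ∀ u : {w : {v : V // ¬ v ∈ A} // ¬ (w.1 ∈ B)}, ρ u.1 = τ u := by
        intro u; rw [← hres]; rfl
      have e1 : ρ yh1 = τ yh2 := hres' yh2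
      have hsub1 : (Finset.univ.filter
          (fun w : {v : V // ¬ v ∈ A} => w.1 ∈ B)).image ρ ⊆ C₂ τ := by
        intro j hj
        obtain ⟨w, hwmem, rfl⟩ := Finset.mem_image.mp hj
        exact hBmem ρ hres' hg1.1 w (Finset.mem_filter.mp hwmem).2
      have hsub2 : C₂ τ ⊆ (Finset.univ.filter
          (fun w : {v : V // ¬ v ∈ A} => w.1 ∈ B)).image ρ := by
        intro j hj
        obtain ⟨hjm, hjgt⟩ := Finset.mem_filter.mp hj
        have hC1eq : C₁ ρ = missing ρ := Finset.eq_of_subset_of_card_le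
          (Finset.filter_subset _ _) (by rw [hmiss₁ ρ]; exact le_of_eq hg1.2.symm)
        have hjrange : ¬ j ∈ missing ρ := by
          intro hcon
          have hj1 : j ∈ C₁ ρ := by rw [hC1eq]; exact hcon
          have hlt := (Finset.mem_filter.mp hj1).2
          rw [e1] at hlt
          exact absurd hjgt (not_lt_of_gt hlt)
        rw [mem_missing] at hjrange
        push_neg at hjrange
        obtain ⟨w, hwj⟩ := hjrange
        have hwB : w.1 ∈ B := by
          by_contra hwB
          have h5 : τ ⟨w, hwB⟩ = j := by rw [← hwj]; exact (hres' ⟨w, hwB⟩).symm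
          exact ((mem_missing τ j).mp hjm) ⟨w, hwB⟩ h5
        exact Finset.mem_image.mpr ⟨w, Finset.mem_filter.mpr ⟨Finset.mem_univ _, hwB⟩, hwj⟩
      show (C₂ τ).card = n - 1
      rw [← Finset.Subset.antisymm hsub1 hsub2,
        Finset.card_image_of_injective _ ρ.injective]
      exact hBimcard
  have step2 : (Finset.univ.filter g₁).card
      = (Finset.univ.filter g₂).card * (n - 1)! := by
    rw [Finset.card_eq_sum_card_fiberwise (f := r₂) (t := Finset.univ)
      (fun x _ => Finset.mem_univ _)]
    have hterm : ∀ τ, ((Finset.univ.filter g₁).filter fun ρ => r₂ ρ = τ).card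
        = if g₂ τ then (n - 1)! else 0 := by
      intro τ
      rw [Finset.filter_filter]
      exact fib2 τ
    rw [Finset.sum_congr rfl (fun τ _ => hterm τ), ← Finset.sum_filter,
      Finset.sum_const, smul_eq_mul]
  -- Step 3
  set r₃ : ({w : {v : V // ¬ v ∈ A} // ¬ (w.1 ∈ B)} ↪ Fin N)
      → ({u : {w : {v : V // ¬ v ∈ A} // ¬ (w.1 ∈ B)} // ¬ (u.1.1 = y)} ↪ Fin N) :=
    fun τ => ⟨fun u => τ u.1, fun u v huv => Subtype.ext (τ.injective huv)⟩ with hr₃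
  have hcardysub : Fintype.card {u : {w : {v : V // ¬ v ∈ A} // ¬ (w.1 ∈ B)} // u.1.1 = y} = 1 := by
    rw [Fintype.card_eq_one_iff]
    refine ⟨⟨yh2, rfl⟩, ?_⟩
    intro u
    apply Subtype.ext; apply Subtype.ext; apply Subtype.ext
    exact u.2
  have hcardD₃ : Fintype.card {u : {w : {v : V // ¬ v ∈ A} // ¬ (w.1 ∈ B)} // ¬ (u.1.1 = y)}
      = N - (2 * n - 1) := by
    rw [Fintype.card_subtype_compl, hcardysub, hcardD₂]
    omega
  have hcardy2 : @Fintype.card {u : {w : {v : V // ¬ v ∈ A} // ¬ (w.1 ∈ B)} // u.1.1 = y}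
      (@Subtype.fintype _ (fun u : {w : {v : V // ¬ v ∈ A} // ¬ (w.1 ∈ B)} => u.1.1 = y)
        (fun a => propDecidable _) _) = 1 := by
    convert hcardysub using 2
  have fib3 : ∀ υ : {u : {w : {v : V // ¬ v ∈ A} // ¬ (w.1 ∈ B)} // ¬ (u.1.1 = y)} ↪ Fin N,
      (Finset.univ.filter fun τ => g₂ τ ∧ r₃ τ = υ).card = 1 := by
    intro υ
    have hRcard : (missing υ).card = 2 * n - 1 := by
      rw [card_missing, Fintype.card_fin, hcardD₃]
      omega
    obtain ⟨t, ⟨htR, htk⟩, huniq⟩ := exists_unique_rank (missing υ) (n - 1)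
      (by rw [hRcard]; omega)
    have hchar : ∀ τ : {w : {v : V // ¬ v ∈ A} // ¬ (w.1 ∈ B)} ↪ Fin N,
        (∀ u : {u : {w : {v : V // ¬ v ∈ A} // ¬ (w.1 ∈ B)} // ¬ (u.1.1 = y)}, τ u.1 = υ u) →
        ((g₂ τ) ↔ τ yh2 = t) := by
      intro τ hres'
      have hy2R : τ yh2 ∈ missing υ := by
        rw [mem_missing]
        intro u heq
        have h1 : u.1 = yh2 := τ.injective ((hres' u).trans heq)
        exact u.2 (congrArg (fun z : {w : {v : V // ¬ v ∈ A} // ¬ (w.1 ∈ B)} => z.1.1) h1)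
      have hmissτ : ∀ j, j ∈ missing τ ↔ (j ∈ missing υ ∧ j ≠ τ yh2) := by
        intro j
        constructor
        · intro hj
          refine ⟨?_, ?_⟩
          · rw [mem_missing]
            intro u heq
            exact (mem_missing τ j).mp hj u.1 ((hres' u).trans heq)
          · intro heq
            exact (mem_missing τ j).mp hj yh2 heq.symm
        · rintro ⟨hjR, hjne⟩
          rw [mem_missing]
          intro u heq
          by_cases hu : u.1.1 = y
          · have hu2 : u = yh2 := Subtype.ext (Subtype.ext hu)
            rw [hu2] at heq
            exact hjne heq.symm
          · exact (mem_missing υ j).mp hjR ⟨u, hu⟩ ((hres' ⟨u, hu⟩).symm.trans heq)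
      have hC2eq : C₂ τ = (missing υ).filter (fun j => τ yh2 < j) := by
        ext j
        rw [hC₂]
        simp only [Finset.mem_filter]
        constructor
        · rintro ⟨hjm, hlt⟩
          exact ⟨((hmissτ j).mp hjm).1, hlt⟩
        · rintro ⟨hjR, hlt⟩
          exact ⟨(hmissτ j).mpr ⟨hjR, (_root_.ne_of_lt hlt).symm⟩, hlt⟩
      constructor
      · intro hg2
        refine huniq (τ yh2) ⟨hy2R, ?_⟩
        rw [← hC2eq]
        exact hg2
      · intro heq
        show (C₂ τ).card = n - 1
        rw [hC2eq, heq]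
        exact htk
    have hpred : ∀ τ : {w : {v : V // ¬ v ∈ A} // ¬ (w.1 ∈ B)} ↪ Fin N, (g₂ τ ∧ r₃ τ = υ) ↔
        ((∀ u : {u : {w : {v : V // ¬ v ∈ A} // ¬ (w.1 ∈ B)} // ¬ (u.1.1 = y)}, τ u.1 = υ u)
          ∧ (∀ u : {w : {v : V // ¬ v ∈ A} // ¬ (w.1 ∈ B)}, u.1.1 = y →
              τ u ∈ ({t} : Finset (Fin N)))) := by
      intro τ
      constructor
      · rintro ⟨hg2, hres⟩
        have hres' : ∀ u, τ u.1 = υ u := by intro u; rw [← hres]; rfl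
        refine ⟨hres', ?_⟩
        intro u hu
        have hu2 : u = yh2 := Subtype.ext (Subtype.ext hu)
        rw [hu2, Finset.mem_singleton]
        exact (hchar τ hres').mp hg2
      · rintro ⟨hres', hyt⟩
        have hres : r₃ τ = υ := by apply Function.Embedding.ext; intro u; exact hres' u
        refine ⟨?_, hres⟩
        apply (hchar τ hres').mpr
        have h6 := hyt yh2 rfl
        rwa [Finset.mem_singleton] at h6
    have hdisj : ∀ u : {u : {w : {v : V // ¬ v ∈ A} // ¬ (w.1 ∈ B)} // ¬ (u.1.1 = y)},
        υ u ∉ ({t} : Finset (Fin N)) := by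
      intro u hu
      rw [Finset.mem_singleton] at hu
      exact ((mem_missing υ t).mp htR) u hu
    have hp := peel (fun u : {w : {v : V // ¬ v ∈ A} // ¬ (w.1 ∈ B)} => u.1.1 = y) υ
      ({t} : Finset (Fin N)) hdisj
      (by rw [Finset.card_singleton]; exact hcardy2.symm)
    refine (card_filter_iff ?_).trans (hp.trans ?_)
    · exact fun τ => hpred τ
    · rw [Finset.card_singleton]
      exact Nat.factorial_one
  have step3 : (Finset.univ.filter g₂).card = N.descFactorial (N - (2 * n - 1)) := by
    rw [Finset.card_eq_sum_card_fiberwise (f := r₃) (t := Finset.univ)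
      (fun x _ => Finset.mem_univ _)]
    have hterm : ∀ υ, ((Finset.univ.filter g₂).filter fun τ => r₃ τ = υ).card = 1 := by
      intro υ
      rw [Finset.filter_filter]
      exact fib3 υ
    rw [Finset.sum_congr rfl (fun υ _ => hterm υ), Finset.sum_const, smul_eq_mul, mul_one,
      Finset.card_univ, Fintype.card_embedding_eq, Fintype.card_fin, hcardD₃]
  -- assemble
  rw [step1, step2, step3]
  have final : N.descFactorial (N - (2 * n - 1)) * (2 * n - 1)! = N ! := by
    have := Nat.factorial_mul_descFactorial (n := N) (k := N - (2 * n - 1)) (by omega)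
    have h2 : N - (N - (2 * n - 1)) = 2 * n - 1 := by omega
    rw [h2] at this
    rw [mul_comm]
    exact this
  calc N.descFactorial (N - (2 * n - 1)) * (n-1)! * (n-1)! * (2*n-1)!
      = (n-1)! * ((n-1)! * (N.descFactorial (N - (2 * n - 1)) * (2*n-1)!)) := by ring
    _ = (n - 1)! * ((n - 1)! * N !) := by rw [final]

end Count


theorem stmt_8 {V : Type*} [Fintype V] [DecidableEq V] (n : ℕ)
    (E : Finset (Finset V)) (hunif : ∀ X ∈ E, X.card = n)
    (hnc : ¬ TwoColorable E)
    (hm2 : m2 E = n * Nat.choose (2 * n - 1) n) :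
    ∀ π : V ≃ Fin (Fintype.card V),
      ∀ X ∈ E, ∀ Y ∈ E, ∀ X' ∈ E, ∀ Y' ∈ E,
        (X ∩ Y).card = 1 → (X' ∩ Y').card = 1 →
        Separates π X Y → Separates π X' Y' → X = X' ∧ Y = Y' := by
  intro π X hX Y hY X' hX' Y' hY' h1 h1' hs hs'
  rcases Nat.eq_zero_or_pos n with hn0 | hn
  · exfalso
    have hle : (X ∩ Y).card ≤ X.card := Finset.card_le_card Finset.inter_subset_left
    rw [hunif X hX, hn0, h1] at hle
    omega
  set SP := (E ×ˢ E).filter (fun p => (p.1 ∩ p.2).card = 1) with hSP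
  set f : (V ≃ Fin (Fintype.card V)) → ℕ := fun π' => (SP.filter fun p => Separates π' p.1 p.2).card with hf
  have hne : ∀ Z ∈ E, Z.Nonempty := by
    intro Z hZ
    apply Finset.card_pos.mp
    rw [hunif Z hZ]
    omega
  have hgeone : ∀ π' : V ≃ Fin (Fintype.card V), 1 ≤ f π' := by
    intro π'
    obtain ⟨X0, hX0, Y0, hY0, hc0, hs0⟩ := exists_sep E hne hnc π'
    apply Finset.card_pos.mpr
    exact ⟨(X0, Y0), Finset.mem_filter.mpr
      ⟨Finset.mem_filter.mpr ⟨Finset.mem_product.mpr ⟨hX0, hY0⟩, hc0⟩, hs0⟩⟩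
  -- exchange sums
  have hexch : ∑ p ∈ SP, (Finset.univ.filter fun π' : V ≃ Fin (Fintype.card V) => Separates π' p.1 p.2).card
      = ∑ π' : V ≃ Fin (Fintype.card V), f π' := by
    set Q := (Finset.univ ×ˢ SP).filter
      (fun q : (V ≃ Fin (Fintype.card V)) × (Finset V × Finset V) => Separates q.1 q.2.1 q.2.2) with hQ
    have h2 : Q.card = ∑ p ∈ SP, ((Q.filter (fun q => q.2 = p)).card) :=
      Finset.card_eq_sum_card_fiberwise
        (fun q hq => (Finset.mem_product.mp (Finset.mem_filter.mp hq).1).2)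
    have h3 : Q.card = ∑ π' : V ≃ Fin (Fintype.card V), ((Q.filter (fun q => q.1 = π')).card) :=
      Finset.card_eq_sum_card_fiberwise (fun q _ => Finset.mem_univ _)
    have h4 : ∀ p ∈ SP, (Q.filter (fun q => q.2 = p)).card
        = (Finset.univ.filter fun π' : V ≃ Fin (Fintype.card V) => Separates π' p.1 p.2).card := by
      intro p hp
      apply Finset.card_bij (fun q _ => q.1)
      · intro q hq
        obtain ⟨hqQ, hq2⟩ := Finset.mem_filter.mp hq
        have := (Finset.mem_filter.mp hqQ).2
        rw [hq2] at this
        exact Finset.mem_filter.mpr ⟨Finset.mem_univ _, this⟩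
      · intro q hq q' hq' heq
        have e2 : q.2 = p := (Finset.mem_filter.mp hq).2
        have e2' : q'.2 = p := (Finset.mem_filter.mp hq').2
        exact Prod.ext heq (e2.trans e2'.symm)
      · intro π' hπ'
        refine ⟨(π', p), Finset.mem_filter.mpr ⟨Finset.mem_filter.mpr
          ⟨Finset.mem_product.mpr ⟨Finset.mem_univ _, hp⟩, ?_⟩, rfl⟩, rfl⟩
        exact (Finset.mem_filter.mp hπ').2
    have h5 : ∀ π' : V ≃ Fin (Fintype.card V), (Q.filter (fun q => q.1 = π')).card = f π' := by
      intro π'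
      apply Finset.card_bij (fun q _ => q.2)
      · intro q hq
        obtain ⟨hqQ, hq1⟩ := Finset.mem_filter.mp hq
        obtain ⟨hmem, hsep2⟩ := Finset.mem_filter.mp hqQ
        rw [hq1] at hsep2
        exact Finset.mem_filter.mpr ⟨(Finset.mem_product.mp hmem).2, hsep2⟩
      · intro q hq q' hq' heq
        have e2 : q.1 = π' := (Finset.mem_filter.mp hq).2
        have e2' : q'.1 = π' := (Finset.mem_filter.mp hq').2
        exact Prod.ext (e2.trans e2'.symm) heq
      · intro p hp
        obtain ⟨hpSP, hsep2⟩ := Finset.mem_filter.mp hp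
        exact ⟨(π', p), Finset.mem_filter.mpr ⟨Finset.mem_filter.mpr
          ⟨Finset.mem_product.mpr ⟨Finset.mem_univ _, hpSP⟩, hsep2⟩, rfl⟩, rfl⟩
    rw [← Finset.sum_congr rfl h4, ← h2, h3]
    exact Finset.sum_congr rfl (fun π' _ => h5 π')
  -- total = (Fintype.card V)!
  have htotal : (∑ π' : V ≃ Fin (Fintype.card V), f π') = (Fintype.card V)! := by
    have hid : n * Nat.choose (2 * n - 1) n * ((n - 1)! * (n - 1)!) = (2 * n - 1)! := by
      have e1 : n * (n - 1)! = n ! := Nat.mul_factorial_pred hn.ne'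
      have e2 := Nat.choose_mul_factorial_mul_factorial (show n ≤ 2 * n - 1 by omega)
      have e3 : 2 * n - 1 - n = n - 1 := by omega
      rw [e3] at e2
      calc n * Nat.choose (2 * n - 1) n * ((n - 1)! * (n - 1)!)
          = Nat.choose (2 * n - 1) n * (n * (n - 1)!) * (n - 1)! := by ring
        _ = Nat.choose (2 * n - 1) n * n ! * (n - 1)! := by rw [e1]
        _ = (2 * n - 1)! := e2
    have hcnt : ∀ p ∈ SP,
        (Finset.univ.filter fun π' : V ≃ Fin (Fintype.card V) => Separates π' p.1 p.2).card * (2 * n - 1)!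
          = (n - 1)! * ((n - 1)! * (Fintype.card V)!) := by
      intro p hp
      obtain ⟨hmem, hcard1⟩ := Finset.mem_filter.mp hp
      obtain ⟨hp1, hp2⟩ := Finset.mem_product.mp hmem
      obtain ⟨y0, hy0⟩ := Finset.card_eq_one.mp hcard1
      exact count_sep n hn p.1 p.2 y0 hy0 (hunif _ hp1) (hunif _ hp2)
    have hSPcard : SP.card = n * Nat.choose (2 * n - 1) n := hm2
    have hmul : (∑ π' : V ≃ Fin (Fintype.card V), f π') * (2 * n - 1)! = (Fintype.card V)! * (2 * n - 1)! := by
      rw [← hexch, Finset.sum_mul]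
      rw [Finset.sum_congr rfl hcnt, Finset.sum_const, smul_eq_mul, hSPcard]
      calc n * Nat.choose (2 * n - 1) n * ((n - 1)! * ((n - 1)! * (Fintype.card V)!))
          = n * Nat.choose (2 * n - 1) n * ((n - 1)! * (n - 1)!) * (Fintype.card V)! := by ring
        _ = (2 * n - 1)! * (Fintype.card V)! := by rw [hid]
        _ = (Fintype.card V)! * (2 * n - 1)! := by ring
    exact Nat.eq_of_mul_eq_mul_right (Nat.factorial_pos _) hmul
  have huniv : (Finset.univ : Finset (V ≃ Fin (Fintype.card V))).card = (Fintype.card V)! := by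
    rw [Finset.card_univ, Fintype.card_equiv (Fintype.equivFin V)]
  -- each fiber has exactly one element
  have hone : f π = 1 := by
    by_contra hcon
    have h2le : 2 ≤ f π := by
      have := hgeone π
      omega
    have hsum : ∑ π' : V ≃ Fin (Fintype.card V), f π' = f π + ∑ π' ∈ Finset.univ.erase π, f π' :=
      (Finset.add_sum_erase Finset.univ f (Finset.mem_univ π)).symm
    have hrest : (Finset.univ.erase π).card ≤ ∑ π' ∈ Finset.univ.erase π, f π' := by
      calc (Finset.univ.erase π).card = ∑ π' ∈ Finset.univ.erase π, 1 := by
            rw [Finset.sum_const, smul_eq_mul, mul_one]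
        _ ≤ ∑ π' ∈ Finset.univ.erase π, f π' :=
            Finset.sum_le_sum (fun i _ => hgeone i)
    have hcard : (Finset.univ.erase π).card = (Fintype.card V)! - 1 := by
      rw [Finset.card_erase_of_mem (Finset.mem_univ π), huniv]
    have hNfac : 1 ≤ (Fintype.card V)! := Nat.one_le_iff_ne_zero.mpr (Nat.factorial_pos (Fintype.card V)).ne'
    rw [htotal] at hsum
    omega
  -- conclude
  have hmemXY : (X, Y) ∈ SP.filter fun p => Separates π p.1 p.2 :=
    Finset.mem_filter.mpr ⟨Finset.mem_filter.mpr ⟨Finset.mem_product.mpr ⟨hX, hY⟩, h1⟩, hs⟩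
  have hmemXY' : (X', Y') ∈ SP.filter fun p => Separates π p.1 p.2 :=
    Finset.mem_filter.mpr ⟨Finset.mem_filter.mpr ⟨Finset.mem_product.mpr ⟨hX', hY'⟩, h1'⟩, hs'⟩
  obtain ⟨q, hq⟩ := Finset.card_eq_one.mp hone
  rw [hq, Finset.mem_singleton] at hmemXY hmemXY'
  have := hmemXY.trans hmemXY'.symm
  exact ⟨congrArg Prod.fst this, congrArg Prod.snd this⟩
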